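/- Let $I$ be a nonnegative random variable with finite mean $\mu$ and finite positive variance $\sigma^2$ satisfying $|\Pr[(I-\mu)/\sigma \le x] - \Psi(x)| \le \Xi\,c(x)$ for all real $x$, and let $H$ be an independent nonnegative random variable with density $q$. Fix $\tau > 0$, $r \ge 0$, and constants $P_k, G_k(r), \mathsf{SNR}_k, \mathsf{PG} > 0$. Define $\zeta(h) = (P_k(h G_k(r)/(e^\tau-1) - \mathsf{SNR}_k^{-1})\,\mathsf{PG} - \mu)/\sigma$, $h_0 = \mathsf{SNR}_k^{-1}(e^\tau-1)/G_k(r)$, $V^+(h) = \min\{1, \Psi(\zeta(h)) + \Xi c(\zeta(h))\}\,\mathbf{1}\{h \ge h_0\}$ and $V^-(h) = \max\{0, \Psi(\zeta(h)) - \Xi c(\zeta(h))\}\,\mathbf{1}\{h \ge h_0\}$. Then the outage probability $P_{out} = \Pr[\log(1 + P_k H G_k(r)/(N_0 + I/\mathsf{PG})) < \tau]$ with $N_0 = P_k/\mathsf{SNR}_k$ satisfies $1 - \mathbb{E}[V^+(H)] \le P_{out} \le 1 - \mathbb{E}[V^-(H)]$. -/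
import Mathlib

open MeasureTheory ProbabilityTheory

/-- The standard normal cumulative distribution function. -/
noncomputable def stdNormalCDF (x : ℝ) : ℝ :=
  (1 / Real.sqrt (2 * Real.pi)) * ∫ t in Set.Iic x, Real.exp (-t ^ 2 / 2)

/-- The weight function `c(x) = min(0.4785, 31.935/(1+|x|³))`. -/
noncomputable def cBE (x : ℝ) : ℝ := min 0.4785 (31.935 / (1 + |x| ^ 3))

lemma gauss_integrable : Integrable (fun t : ℝ => Real.exp (-t ^ 2 / 2)) := by
  have h := integrable_exp_neg_mul_sq (b := (1/2 : ℝ)) (by norm_num)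
  have he : (fun t : ℝ => Real.exp (-t ^ 2 / 2)) = fun t : ℝ => Real.exp (-(1/2) * t ^ 2) := by
    funext t; congr 1; ring
  rw [he]; exact h

lemma stdNormalCDF_nonneg (x : ℝ) : 0 ≤ stdNormalCDF x := by
  unfold stdNormalCDF
  apply mul_nonneg (by positivity)
  apply setIntegral_nonneg measurableSet_Iic
  intro t _; positivity

lemma stdNormalCDF_mono : Monotone stdNormalCDF := by
  intro x y hxy
  unfold stdNormalCDF
  apply mul_le_mul_of_nonneg_left _ (by positivity)
  apply setIntegral_mono_set gauss_integrable.integrableOn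
    (Filter.Eventually.of_forall fun t => by positivity)
    (HasSubset.Subset.eventuallyLE (Set.Iic_subset_Iic.mpr hxy))

lemma cBE_nonneg (x : ℝ) : 0 ≤ cBE x := by
  unfold cBE
  have h : (0:ℝ) < 1 + |x| ^ 3 := by positivity
  exact le_min (by norm_num) (by positivity)

lemma cBE_measurable : Measurable cBE := by
  unfold cBE
  exact measurable_const.min (measurable_const.div (by measurability))

theorem stmt5 {Ω : Type*} [MeasureSpace Ω] [IsProbabilityMeasure (ℙ : Measure Ω)]
    (I H : Ω → ℝ) (hIm : Measurable I) (hHm : Measurable H)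
    (hInn : ∀ ω, 0 ≤ I ω) (hHnn : ∀ ω, 0 ≤ H ω)
    (hindep : IndepFun I H ℙ)
    (q : ℝ → ℝ) (hq : ∀ x, 0 ≤ q x) (hqm : Measurable q)
    (hdens : Measure.map H ℙ = volume.withDensity (fun x => ENNReal.ofReal (q x)))
    (μ σ Ξ : ℝ) (hσ : 0 < σ) (hΞ : 0 ≤ Ξ)
    (hIint : Integrable I ℙ) (hμ : μ = ∫ ω, I ω ∂ℙ)
    (hvar : ProbabilityTheory.variance I ℙ = σ ^ 2)
    (happrox : ∀ x : ℝ,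
      |(ℙ {ω | (I ω - μ) / σ ≤ x}).toReal - stdNormalCDF x| ≤ Ξ * cBE x)
    (τ r Pk Gkr SNRk PG : ℝ) (hτ : 0 < τ) (hr : 0 ≤ r)
    (hPk : 0 < Pk) (hGkr : 0 < Gkr) (hSNRk : 0 < SNRk) (hPG : 0 < PG)
    (ζ : ℝ → ℝ)
    (hζ : ∀ h, ζ h = (Pk * (h * Gkr / (Real.exp τ - 1) - SNRk⁻¹) * PG - μ) / σ)
    (h0 : ℝ) (hh0 : h0 = SNRk⁻¹ * (Real.exp τ - 1) / Gkr)
    (Vp Vm : ℝ → ℝ)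
    (hVp : ∀ h, Vp h =
      (Set.Ici h0).indicator (fun x => min 1 (stdNormalCDF (ζ x) + Ξ * cBE (ζ x))) h)
    (hVm : ∀ h, Vm h =
      (Set.Ici h0).indicator (fun x => max 0 (stdNormalCDF (ζ x) - Ξ * cBE (ζ x))) h) :
    1 - ∫ ω, Vp (H ω) ∂ℙ ≤
      (ℙ {ω | Real.log (1 + Pk * H ω * Gkr / (Pk / SNRk + I ω / PG)) < τ}).toReal ∧
    (ℙ {ω | Real.log (1 + Pk * H ω * Gkr / (Pk / SNRk + I ω / PG)) < τ}).toReal ≤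
      1 - ∫ ω, Vm (H ω) ∂ℙ := by
  have hE : 0 < Real.exp τ - 1 := by
    have h1 : (1:ℝ) < Real.exp τ := by
      rw [← Real.exp_zero]; exact Real.exp_lt_exp.mpr hτ
    linarith
  set E := Real.exp τ - 1 with hEdef
  set t : ℝ → ℝ := fun h => Pk * (h * Gkr / E - SNRk⁻¹) * PG with htdef
  have hζ' : ∀ h, ζ h = (t h - μ) / σ := hζ
  have htm : Measurable t := by
    rw [htdef]; measurability
  have ht_mono : Monotone t := by
    intro a b hab
    simp only [htdef]
    have h1 : a * Gkr / E ≤ b * Gkr / E := by gcongr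
    have h2 : a * Gkr / E - SNRk⁻¹ ≤ b * Gkr / E - SNRk⁻¹ := by linarith
    exact mul_le_mul_of_nonneg_right (mul_le_mul_of_nonneg_left h2 hPk.le) hPG.le
  set g : ℝ → ℝ := fun h => (ℙ {ω | I ω ≤ t h}).toReal with hgdef
  have g_nonneg : ∀ h, 0 ≤ g h := fun h => ENNReal.toReal_nonneg
  have g_le_one : ∀ h, g h ≤ 1 := by
    intro h
    have := ENNReal.toReal_mono (a := ℙ {ω | I ω ≤ t h}) ENNReal.one_ne_top prob_le_one
    simpa using this
  have g_mono : Monotone g := by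
    intro a b hab
    apply ENNReal.toReal_mono (measure_ne_top _ _)
    exact measure_mono fun ω hω => le_trans hω (ht_mono hab)
  have hgmeas : Measurable g := g_mono.measurable
  -- happrox in terms of g
  have happrox' : ∀ h, |g h - stdNormalCDF (ζ h)| ≤ Ξ * cBE (ζ h) := by
    intro h
    have hset : {ω | (I ω - μ) / σ ≤ ζ h} = {ω | I ω ≤ t h} := by
      ext ω
      simp only [Set.mem_setOf_eq, hζ' h]
      rw [div_le_div_iff_of_pos_right hσ, sub_le_sub_iff_right]
    have := happrox (ζ h)
    rwa [hset] at this
  -- below h0 the conditional success probability vanishes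
  have g_zero : ∀ h, h < h0 → g h = 0 := by
    intro h hh
    have ht_neg : t h < 0 := by
      have h1 : h * Gkr < SNRk⁻¹ * E := by
        have := (lt_div_iff₀ hGkr).mp (hh0 ▸ hh)
        linarith
      have h2 : h * Gkr / E < SNRk⁻¹ := (div_lt_iff₀ hE).mpr (by linarith)
      have h3 : h * Gkr / E - SNRk⁻¹ < 0 := by linarith
      simp only [htdef]
      exact mul_neg_of_neg_of_pos (mul_neg_of_pos_of_neg hPk h3) hPG
    have hempty : {ω | I ω ≤ t h} = ∅ := by
      ext ω
      simp only [Set.mem_setOf_eq, Set.mem_empty_iff_false, iff_false, not_le]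
      exact lt_of_lt_of_le ht_neg (hInn ω)
    simp [hgdef, hempty]
  -- pointwise bounds
  have hgVp : ∀ h, g h ≤ Vp h := by
    intro h
    rw [hVp h]
    by_cases hh : h ∈ Set.Ici h0
    · rw [Set.indicator_of_mem hh]
      refine le_min (g_le_one h) ?_
      have := (abs_le.mp (happrox' h)).2
      linarith
    · rw [Set.indicator_of_notMem hh]
      rw [g_zero h (lt_of_not_ge hh)]
  have hVmg : ∀ h, Vm h ≤ g h := by
    intro h
    rw [hVm h]
    by_cases hh : h ∈ Set.Ici h0
    · rw [Set.indicator_of_mem hh]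
      refine max_le (g_nonneg h) ?_
      have := (abs_le.mp (happrox' h)).1
      linarith
    · rw [Set.indicator_of_notMem hh]
      exact g_nonneg h
  -- measurability and bounds of Vp, Vm
  have hζmeas : Measurable ζ := by
    have hz : ζ = fun h => (t h - μ) / σ := funext hζ'
    rw [hz]
    exact ((htm.sub measurable_const).div measurable_const)
  have hVpmeas : Measurable Vp := by
    have hv : Vp = (Set.Ici h0).indicator
        (fun x => min 1 (stdNormalCDF (ζ x) + Ξ * cBE (ζ x))) := funext hVp
    rw [hv]
    exact Measurable.indicator
      (measurable_const.min ((stdNormalCDF_mono.measurable.comp hζmeas).add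
        (measurable_const.mul (cBE_measurable.comp hζmeas)))) measurableSet_Ici
  have hVmmeas : Measurable Vm := by
    have hv : Vm = (Set.Ici h0).indicator
        (fun x => max 0 (stdNormalCDF (ζ x) - Ξ * cBE (ζ x))) := funext hVm
    rw [hv]
    exact Measurable.indicator
      (measurable_const.max ((stdNormalCDF_mono.measurable.comp hζmeas).sub
        (measurable_const.mul (cBE_measurable.comp hζmeas)))) measurableSet_Ici
  have hVp_nonneg : ∀ h, 0 ≤ Vp h := by
    intro h
    rw [hVp h]
    apply Set.indicator_nonneg
    intro x _
    exact le_min zero_le_one (add_nonneg (stdNormalCDF_nonneg _)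
      (mul_nonneg hΞ (cBE_nonneg _)))
  have hVp_le_one : ∀ h, Vp h ≤ 1 := by
    intro h
    rw [hVp h]
    by_cases hh : h ∈ Set.Ici h0
    · rw [Set.indicator_of_mem hh]; exact min_le_left _ _
    · rw [Set.indicator_of_notMem hh]; exact zero_le_one
  have hVm_nonneg : ∀ h, 0 ≤ Vm h := by
    intro h
    rw [hVm h]
    apply Set.indicator_nonneg
    intro x _
    exact le_max_left _ _
  have hVm_le_one : ∀ h, Vm h ≤ 1 := fun h => le_trans (hVmg h) (g_le_one h)
  -- integrability helper
  have hint : ∀ X : ℝ → ℝ, Measurable X → (∀ h, 0 ≤ X h) → (∀ h, X h ≤ 1) →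
      Integrable (fun ω => X (H ω)) ℙ := by
    intro X hXm h0X h1X
    apply (integrable_const (1:ℝ)).mono' ((hXm.comp hHm).aestronglyMeasurable)
    filter_upwards with ω
    simp only [Function.comp_apply, Real.norm_eq_abs]
    rw [abs_of_nonneg (h0X _)]
    exact h1X _
  -- key identity: probability of success = ∫ g ∘ H
  haveI : IsProbabilityMeasure (Measure.map I ℙ) := Measure.isProbabilityMeasure_map hIm.aemeasurable
  haveI : IsProbabilityMeasure (Measure.map H ℙ) := Measure.isProbabilityMeasure_map hHm.aemeasurable
  have hpair : Measure.map (fun ω => (H ω, I ω)) ℙ =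
      (Measure.map H ℙ).prod (Measure.map I ℙ) :=
    (indepFun_iff_map_prod_eq_prod_map_map hHm.aemeasurable hIm.aemeasurable).mp hindep.symm
  have hS : MeasurableSet {p : ℝ × ℝ | p.2 ≤ t p.1} :=
    measurableSet_le measurable_snd (htm.comp measurable_fst)
  have hAmeas : MeasurableSet {ω | I ω ≤ t (H ω)} :=
    measurableSet_le hIm (htm.comp hHm)
  have hA_eq : ℙ {ω | I ω ≤ t (H ω)} =
      ∫⁻ h, ℙ {ω | I ω ≤ t h} ∂(Measure.map H ℙ) := by
    have h1 : {ω | I ω ≤ t (H ω)} = (fun ω => (H ω, I ω)) ⁻¹' {p | p.2 ≤ t p.1} := rfl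
    rw [h1, ← Measure.map_apply (hHm.prodMk hIm) hS, hpair, Measure.prod_apply hS]
    apply lintegral_congr
    intro h
    have h2 : (Prod.mk h ⁻¹' {p : ℝ × ℝ | p.2 ≤ t p.1}) = Set.Iic (t h) := rfl
    rw [h2, Measure.map_apply hIm measurableSet_Iic]
    rfl
  have hPA : (ℙ {ω | I ω ≤ t (H ω)}).toReal = ∫ ω, g (H ω) ∂ℙ := by
    rw [← integral_map hHm.aemeasurable hgmeas.aestronglyMeasurable,
      integral_eq_lintegral_of_nonneg_ae (Filter.Eventually.of_forall g_nonneg)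
        hgmeas.aestronglyMeasurable, hA_eq]
    congr 1
    apply lintegral_congr
    intro h
    simp only [hgdef]
    rw [ENNReal.ofReal_toReal (measure_ne_top _ _)]
  -- the outage event is the complement of the success event
  have key : ∀ ω, (Real.log (1 + Pk * H ω * Gkr / (Pk / SNRk + I ω / PG)) < τ ↔
      t (H ω) < I ω) := by
    intro ω
    have hi : 0 ≤ I ω := hInn ω
    have hh : 0 ≤ H ω := hHnn ω
    have hD : 0 < Pk / SNRk + I ω / PG := by positivity
    have hR : 0 ≤ Pk * H ω * Gkr / (Pk / SNRk + I ω / PG) := by positivity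
    rw [Real.log_lt_iff_lt_exp (by linarith)]
    have step2 : Pk * H ω * Gkr / (Pk / SNRk + I ω / PG) < E ↔
        Pk * H ω * Gkr < E * (Pk / SNRk + I ω / PG) := div_lt_iff₀ hD
    have step3 : t (H ω) < I ω ↔ Pk * H ω * Gkr < E * (Pk / SNRk + I ω / PG) := by
      have ht2 : t (H ω) = (Pk * H ω * Gkr / E - Pk / SNRk) * PG := by
        simp only [htdef]; ring
      rw [ht2]
      constructor
      · intro hlt
        have h1 : Pk * H ω * Gkr / E - Pk / SNRk < I ω / PG := (lt_div_iff₀ hPG).mpr hlt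
        have h2 : Pk * H ω * Gkr / E < Pk / SNRk + I ω / PG := by linarith
        have h3 := (div_lt_iff₀ hE).mp h2
        linarith [h3, mul_comm (Pk / SNRk + I ω / PG) E]
      · intro hlt
        have h2 : Pk * H ω * Gkr / E < Pk / SNRk + I ω / PG := by
          rw [div_lt_iff₀ hE]
          linarith [mul_comm (Pk / SNRk + I ω / PG) E]
        have h1 : Pk * H ω * Gkr / E - Pk / SNRk < I ω / PG := by linarith
        have := (lt_div_iff₀ hPG).mp h1
        linarith
    constructor
    · intro hlt
      rw [step3]
      rw [← step2]
      have hEe : E = Real.exp τ - 1 := hEdef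
      linarith [hlt]
    · intro hlt
      rw [step3, ← step2] at hlt
      have hEe : E = Real.exp τ - 1 := hEdef
      linarith [hlt]
  have hOc : {ω | Real.log (1 + Pk * H ω * Gkr / (Pk / SNRk + I ω / PG)) < τ} =
      {ω | I ω ≤ t (H ω)}ᶜ := by
    ext ω
    simp only [Set.mem_setOf_eq, Set.mem_compl_iff, not_le]
    exact key ω
  have hout : (ℙ {ω | Real.log (1 + Pk * H ω * Gkr / (Pk / SNRk + I ω / PG)) < τ}).toReal =
      1 - ∫ ω, g (H ω) ∂ℙ := by
    rw [hOc, prob_compl_eq_one_sub hAmeas,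
      ENNReal.toReal_sub_of_le prob_le_one ENNReal.one_ne_top]
    simp [hPA]
  constructor
  · rw [hout]
    have := integral_mono (hint g hgmeas g_nonneg g_le_one)
      (hint Vp hVpmeas hVp_nonneg hVp_le_one) (fun ω => hgVp (H ω))
    linarith
  · rw [hout]
    have := integral_mono (hint Vm hVmmeas hVm_nonneg hVm_le_one)
      (hint g hgmeas g_nonneg g_le_one) (fun ω => hVmg (H ω))
    linarith
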